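/- Let α : [0,∞) → ℝ be nondecreasing and left-continuous, let α⁺(t) = inf_{u > t} α(u) be its right-continuous modification (which is nondecreasing and right-continuous and thus induces a Lebesgue–Stieltjes measure dα⁺), let γ : [0,∞) → ℝ be continuous, and define the integral ∫₀ᵗ γ dα := 0 for t = 0 and ∫₀ᵗ γ dα := γ(0)·(α⁺(0) − α(0)) + ∫_{(0,t)} γ(u) dα⁺(u) for t > 0. Then for any nondecreasing left-continuous ζ : [0,∞) → ℝ, with ζ⁺(t) = inf_{u > t} ζ(u), the following are equivalent: (1) ζ(t) = ζ(0) + ∫₀ᵗ γ dα for all t ∈ [0,∞); (2) ζ⁺(0) − ζ(0) = γ(0)·(α⁺(0) − α(0)), and for all rationals 0 < r < s and every n ∈ ℕ there exist rationals p, q ∈ (r, s) such that (γ(p) − 1/n)·(α⁺(s) − α⁺(r)) ≤ ζ⁺(s) − ζ⁺(r) ≤ (γ(q) + 1/n)·(α⁺(s) − α⁺(r)). -/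

import Mathlib

open MeasureTheory Set Function Filter Topology

section StieltjesAux

variable {γ : ℝ → ℝ}

private lemma aux_int (F : StieltjesFunction ℝ) (hγ : Continuous γ) (a b : ℝ) :
    IntegrableOn γ (Set.Ioc a b) F.measure :=
  hγ.integrableOn_Ioc

private lemma aux_int_Ioo (F : StieltjesFunction ℝ) (hγ : Continuous γ) (a b : ℝ) :
    IntegrableOn γ (Set.Ioo a b) F.measure :=
  (hγ.integrableOn_Ioc).mono_set Set.Ioo_subset_Ioc_self

private lemma aux_meas (F : StieltjesFunction ℝ) {a b : ℝ} (hab : a ≤ b) :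
    (F.measure (Set.Ioc a b)).toReal = F b - F a := by
  rw [F.measure_Ioc, ENNReal.toReal_ofReal (by linarith [F.mono hab])]

private lemma aux_fin (F : StieltjesFunction ℝ) (a b : ℝ) : F.measure (Set.Ioc a b) < ⊤ := by
  rw [F.measure_Ioc]; exact ENNReal.ofReal_lt_top

private lemma aux_add (F : StieltjesFunction ℝ) (hγ : Continuous γ) {a b c : ℝ}
    (h1 : a ≤ b) (h2 : b ≤ c) :
    ∫ u in Set.Ioc a c, γ u ∂F.measure
      = (∫ u in Set.Ioc a b, γ u ∂F.measure) + ∫ u in Set.Ioc b c, γ u ∂F.measure := by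
  rw [← Set.Ioc_union_Ioc_eq_Ioc h1 h2,
    setIntegral_union (Set.Ioc_disjoint_Ioc_of_le le_rfl) measurableSet_Ioc (aux_int F hγ a b)
      (aux_int F hγ b c)]

private lemma aux_add' (F : StieltjesFunction ℝ) (hγ : Continuous γ) {a b c : ℝ}
    (h1 : a ≤ b) (h2 : b < c) :
    ∫ u in Set.Ioo a c, γ u ∂F.measure
      = (∫ u in Set.Ioc a b, γ u ∂F.measure) + ∫ u in Set.Ioo b c, γ u ∂F.measure := by
  rw [← Set.Ioc_union_Ioo_eq_Ioo h1 h2,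
    setIntegral_union ((Set.Ioc_disjoint_Ioc_of_le le_rfl).mono_right Set.Ioo_subset_Ioc_self)
      measurableSet_Ioo (aux_int F hγ a b) (aux_int_Ioo F hγ b c)]

private lemma aux_bound (F : StieltjesFunction ℝ) (hγ : Continuous γ) {a b C : ℝ} (hab : a ≤ b)
    (hC : ∀ x ∈ Set.Icc a b, |γ x| ≤ C) :
    |∫ u in Set.Ioo a b, γ u ∂F.measure| ≤ C * (F b - F a) := by
  have h1 : F.measure (Set.Ioo a b) < ⊤ :=
    lt_of_le_of_lt (measure_mono Set.Ioo_subset_Ioc_self) (aux_fin F a b)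
  have := norm_setIntegral_le_of_norm_le_const (f := γ) (μ := F.measure) h1
    (fun x hx => hC x ⟨le_of_lt hx.1, le_of_lt hx.2⟩)
  refine le_trans this ?_
  rw [measureReal_def]
  have hC0 : 0 ≤ C := le_trans (abs_nonneg _) (hC a ⟨le_refl a, hab⟩)
  have h2 : (F.measure (Set.Ioo a b)).toReal ≤ F b - F a := by
    refine le_trans (ENNReal.toReal_mono (by rw [F.measure_Ioc]; exact ENNReal.ofReal_ne_top)
      (measure_mono Set.Ioo_subset_Ioc_self)) ?_
    rw [aux_meas F hab]
  nlinarith [ENNReal.toReal_nonneg (a := F.measure (Set.Ioo a b))]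

private lemma aux_boundIoc (F : StieltjesFunction ℝ) (hγ : Continuous γ) {a b C : ℝ} (hab : a ≤ b)
    (hC : ∀ x ∈ Set.Icc a b, |γ x| ≤ C) :
    |∫ u in Set.Ioc a b, γ u ∂F.measure| ≤ C * (F b - F a) := by
  have := norm_setIntegral_le_of_norm_le_const (f := γ) (μ := F.measure) (aux_fin F a b)
    (fun x hx => hC x ⟨hx.1.le, hx.2⟩)
  refine le_trans this ?_
  rw [measureReal_def, aux_meas F hab]

private lemma aux_int_lb (F : StieltjesFunction ℝ) (hγ : Continuous γ) {a b x : ℝ} (hab : a ≤ b)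
    (hx : ∀ z ∈ Set.Ioc a b, γ x ≤ γ z) :
    γ x * (F b - F a) ≤ ∫ u in Set.Ioc a b, γ u ∂F.measure := by
  have h1 : ∫ _ in Set.Ioc a b, (γ x) ∂F.measure = γ x * (F b - F a) := by
    rw [setIntegral_const, measureReal_def, aux_meas F hab, smul_eq_mul, mul_comm]
  rw [← h1]
  exact setIntegral_mono_on (integrableOn_const (aux_fin F a b).ne)
    (aux_int F hγ a b) measurableSet_Ioc hx

private lemma aux_int_ub (F : StieltjesFunction ℝ) (hγ : Continuous γ) {a b x : ℝ} (hab : a ≤ b)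
    (hx : ∀ z ∈ Set.Ioc a b, γ z ≤ γ x) :
    (∫ u in Set.Ioc a b, γ u ∂F.measure) ≤ γ x * (F b - F a) := by
  have h1 : ∫ _ in Set.Ioc a b, (γ x) ∂F.measure = γ x * (F b - F a) := by
    rw [setIntegral_const, measureReal_def, aux_meas F hab, smul_eq_mul, mul_comm]
  rw [← h1]
  exact setIntegral_mono_on (aux_int F hγ a b)
    (integrableOn_const (aux_fin F a b).ne) measurableSet_Ioc hx

private lemma aux_FrightTendsto (F : StieltjesFunction ℝ) (s : ℝ) :
    Tendsto (fun t => F t) (𝓝[>] s) (𝓝 (F s)) :=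
  ((F.right_continuous s).tendsto).mono_left (nhdsWithin_mono s Set.Ioi_subset_Ici_self)

private lemma aux_tendsto_zero (F : StieltjesFunction ℝ) (hγ : Continuous γ) (s : ℝ) :
    Tendsto (fun t => ∫ u in Set.Ioo s t, γ u ∂F.measure) (𝓝[>] s) (𝓝 0) := by
  obtain ⟨C, hC⟩ := (isCompact_Icc (a := s) (b := s + 1)).exists_bound_of_continuousOn
    hγ.continuousOn
  have hev : ∀ᶠ t in 𝓝[>] s, ‖∫ u in Set.Ioo s t, γ u ∂F.measure‖ ≤ C * (F t - F s) := by
    filter_upwards [Ioo_mem_nhdsGT_of_mem ⟨le_rfl, lt_add_one s⟩] with t ht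
    rw [Real.norm_eq_abs]
    exact aux_bound F hγ ht.1.le fun x hx => hC x ⟨hx.1, hx.2.trans ht.2.le⟩
  have hg : Tendsto (fun t => C * (F t - F s)) (𝓝[>] s) (𝓝 0) := by
    have := (aux_FrightTendsto F s).sub_const (F s)
    simpa using this.const_mul C
  exact squeeze_zero_norm' hev hg

private lemma aux_tendsto_Ioo (F : StieltjesFunction ℝ) (hγ : Continuous γ) {s : ℝ} (hs : 0 ≤ s) :
    Tendsto (fun t => ∫ u in Set.Ioo 0 t, γ u ∂F.measure) (𝓝[>] s)
      (𝓝 (∫ u in Set.Ioc 0 s, γ u ∂F.measure)) := by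
  have heq : ∀ᶠ t in 𝓝[>] s, (∫ u in Set.Ioc 0 s, γ u ∂F.measure)
      + (∫ u in Set.Ioo s t, γ u ∂F.measure) = ∫ u in Set.Ioo 0 t, γ u ∂F.measure := by
    filter_upwards [self_mem_nhdsWithin] with t ht
    exact (aux_add' F hγ hs ht).symm
  have := (tendsto_const_nhds (x := ∫ u in Set.Ioc 0 s, γ u ∂F.measure)
    (f := 𝓝[>] s)).add (aux_tendsto_zero F hγ s)
  rw [add_zero] at this
  exact Tendsto.congr' heq this

/-- find a rational point near a given point of `Icc a b`, inside `Ioo a b`. -/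
private lemma aux_rat_near {a b x δ : ℝ} (hab : a < b) (hx : x ∈ Set.Icc a b) (hδ : 0 < δ) :
    ∃ p : ℚ, a < (p : ℝ) ∧ (p : ℝ) < b ∧ |(p : ℝ) - x| < δ := by
  obtain ⟨p, hp1, hp2⟩ := exists_rat_btwn (show max a (x - δ) < min b (x + δ) by
    rcases hx with ⟨h1, h2⟩
    apply max_lt <;> apply lt_min <;> linarith)
  refine ⟨p, lt_of_le_of_lt (le_max_left _ _) hp1, lt_of_lt_of_le hp2 (min_le_left _ _), ?_⟩
  rw [abs_sub_lt_iff]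
  constructor
  · have := lt_of_lt_of_le hp2 (min_le_right _ _); linarith
  · have := lt_of_le_of_lt (le_max_right _ _) hp1; linarith

end StieltjesAux

set_option maxHeartbeats 1000000 in
theorem stmt19 (α ζ γ : ℝ → ℝ) (hα : Monotone α)
    (hαl : ∀ t : ℝ, 0 < t → ContinuousWithinAt α (Set.Iio t) t)
    (hζ : Monotone ζ)
    (hζl : ∀ t : ℝ, 0 < t → ContinuousWithinAt ζ (Set.Iio t) t)
    (hγ : Continuous γ) :
    (∀ t : ℝ, 0 ≤ t →
        ζ t = ζ 0 + (if t = 0 then 0 else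
          γ 0 * (rightLim α 0 - α 0) +
            ∫ u in Set.Ioo (0 : ℝ) t, γ u ∂hα.stieltjesFunction.measure)) ↔
      (rightLim ζ 0 - ζ 0 = γ 0 * (rightLim α 0 - α 0) ∧
        ∀ r s : ℚ, 0 < (r : ℝ) → (r : ℝ) < (s : ℝ) → ∀ n : ℕ, 0 < n →
          ∃ p q : ℚ, (r : ℝ) < (p : ℝ) ∧ (p : ℝ) < (s : ℝ) ∧
            (r : ℝ) < (q : ℝ) ∧ (q : ℝ) < (s : ℝ) ∧
            (γ p - 1 / (n : ℝ)) * (rightLim α s - rightLim α r) ≤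
              rightLim ζ s - rightLim ζ r ∧
            rightLim ζ s - rightLim ζ r ≤
              (γ q + 1 / (n : ℝ)) * (rightLim α s - rightLim α r)) := by
  set F := hα.stieltjesFunction with hFdef
  have hF : ∀ x : ℝ, rightLim α x = F x := fun x => (hα.stieltjesFunction_eq x).symm
  have hZ : ∀ x : ℝ, rightLim ζ x = hζ.stieltjesFunction x :=
    fun x => (hζ.stieltjesFunction_eq x).symm
  set Z := hζ.stieltjesFunction with hZdef
  set c := γ 0 * (rightLim α 0 - α 0) with hc
  constructor
  · intro h
    -- the key formula for the right limit of ζ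
    have key : ∀ s : ℝ, 0 ≤ s →
        Z s = ζ 0 + c + ∫ u in Set.Ioc 0 s, γ u ∂F.measure := by
      intro s hs
      rw [hZdef, ← hZ s]
      apply rightLim_eq_of_tendsto
      have hev : ∀ᶠ t in 𝓝[>] s,
          (ζ 0 + c + ∫ u in Set.Ioo 0 t, γ u ∂F.measure) = ζ t := by
        filter_upwards [self_mem_nhdsWithin] with t ht
        have ht0 : 0 < t := lt_of_le_of_lt hs ht
        rw [h t ht0.le, if_neg ht0.ne']; ring
      exact Tendsto.congr' hev
        (((tendsto_const_nhds.add tendsto_const_nhds).add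
          (aux_tendsto_Ioo F hγ hs)).congr (fun t => rfl))
    have key0 : Z 0 = ζ 0 + c := by
      have := key 0 le_rfl
      rwa [Set.Ioc_self, Measure.restrict_empty, integral_zero_measure, add_zero] at this
    constructor
    · rw [hZ 0]; rw [key0]; ring
    · intro r s hr hrs n hn
      have hZdiff : rightLim ζ s - rightLim ζ r = ∫ u in Set.Ioc (r:ℝ) s, γ u ∂F.measure := by
        rw [hZ, hZ, key s (by linarith), key r hr.le,
          aux_add F hγ hr.le hrs.le]
        ring
      have hFr : rightLim α (s:ℝ) - rightLim α (r:ℝ) = F s - F r := by rw [hF, hF]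
      have hFnn : (0:ℝ) ≤ F s - F r := by linarith [F.mono hrs.le]
      have hn' : (0:ℝ) < 1 / n := by positivity
      -- min point
      obtain ⟨x, hxmem, hxmin⟩ := (isCompact_Icc (a := (r:ℝ)) (b := (s:ℝ))).exists_isMinOn
        (Set.nonempty_Icc.2 hrs.le) hγ.continuousOn
      obtain ⟨y, hymem, hymax⟩ := (isCompact_Icc (a := (r:ℝ)) (b := (s:ℝ))).exists_isMaxOn
        (Set.nonempty_Icc.2 hrs.le) hγ.continuousOn
      -- continuity of γ at x and y
      obtain ⟨δ₁, hδ₁, hδ₁'⟩ := Metric.continuousAt_iff.1 (hγ.continuousAt (x := x)) (1/n) hn'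
      obtain ⟨δ₂, hδ₂, hδ₂'⟩ := Metric.continuousAt_iff.1 (hγ.continuousAt (x := y)) (1/n) hn'
      obtain ⟨p, hp1, hp2, hp3⟩ := aux_rat_near hrs hxmem hδ₁
      obtain ⟨q, hq1, hq2, hq3⟩ := aux_rat_near hrs hymem hδ₂
      refine ⟨p, q, hp1, hp2, hq1, hq2, ?_, ?_⟩
      · have hγp : |γ p - γ x| < 1/n := by
          have := hδ₁' (x := (p:ℝ)) (by rwa [Real.dist_eq]); rwa [Real.dist_eq] at this
        have h1 : γ ↑p - 1/n < γ x := by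
          rw [abs_sub_lt_iff] at hγp; linarith [hγp.1]
        rw [hZdiff, hFr]
        refine le_trans ?_ (aux_int_lb F hγ hrs.le
          (fun z hz => hxmin ⟨hz.1.le, hz.2⟩))
        nlinarith
      · have hγq : |γ q - γ y| < 1/n := by
          have := hδ₂' (x := (q:ℝ)) (by rwa [Real.dist_eq]); rwa [Real.dist_eq] at this
        have h1 : γ y < γ ↑q + 1/n := by
          rw [abs_sub_lt_iff] at hγq; linarith [hγq.2]
        rw [hZdiff, hFr]
        refine le_trans (aux_int_ub F hγ hrs.le
          (fun z hz => hymax ⟨hz.1.le, hz.2⟩)) ?_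
        nlinarith
  · rintro ⟨h0, hsand⟩
    simp only [hZ, hF] at h0 hsand
    have hZ0 : Z 0 = ζ 0 + c := by linarith
    have hζZ : ∀ x : ℝ, ζ x ≤ Z x := fun x => by
      rw [← hZ]; exact hζ.le_rightLim le_rfl
    have hZζ : ∀ x y : ℝ, x < y → Z x ≤ ζ y := fun x y h => by
      rw [← hZ]; exact hζ.rightLim_le h
    -- Step A: sandwich of increments of Z by attained extrema of γ
    have stepA_lb : ∀ u v : ℚ, 0 < (u:ℝ) → (u:ℝ) < (v:ℝ) → ∀ x ∈ Set.Icc (u:ℝ) (v:ℝ),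
        (∀ z ∈ Set.Icc (u:ℝ) (v:ℝ), γ x ≤ γ z) → γ x * (F v - F u) ≤ Z v - Z u := by
      intro u v hu huv x hx hmin
      have hFnn : (0:ℝ) ≤ F v - F u := by linarith [F.mono huv.le]
      have hlim : Tendsto (fun n : ℕ => (γ x - 1/((n:ℝ)+1)) * (F v - F u)) atTop
          (𝓝 (γ x * (F v - F u))) := by
        have h1 : Tendsto (fun n : ℕ => 1/((n:ℝ)+1)) atTop (𝓝 0) :=
          tendsto_one_div_add_atTop_nhds_zero_nat
        have := (tendsto_const_nhds (x := γ x) (f := atTop)).sub h1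
        simpa using this.mul_const (F v - F u)
      refine le_of_tendsto hlim (Eventually.of_forall fun n => ?_)
      obtain ⟨p, q, hp1, hp2, _, _, hple, _⟩ := hsand u v hu huv (n+1) n.succ_pos
      push_cast at hple
      have hxp : γ x ≤ γ ↑p := hmin _ ⟨hp1.le, hp2.le⟩
      nlinarith
    have stepA_ub : ∀ u v : ℚ, 0 < (u:ℝ) → (u:ℝ) < (v:ℝ) → ∀ x ∈ Set.Icc (u:ℝ) (v:ℝ),
        (∀ z ∈ Set.Icc (u:ℝ) (v:ℝ), γ z ≤ γ x) → Z v - Z u ≤ γ x * (F v - F u) := by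
      intro u v hu huv x hx hmax
      have hFnn : (0:ℝ) ≤ F v - F u := by linarith [F.mono huv.le]
      have hlim : Tendsto (fun n : ℕ => (γ x + 1/((n:ℝ)+1)) * (F v - F u)) atTop
          (𝓝 (γ x * (F v - F u))) := by
        have h1 : Tendsto (fun n : ℕ => 1/((n:ℝ)+1)) atTop (𝓝 0) :=
          tendsto_one_div_add_atTop_nhds_zero_nat
        have := (tendsto_const_nhds (x := γ x) (f := atTop)).add h1
        simpa using this.mul_const (F v - F u)
      refine ge_of_tendsto hlim (Eventually.of_forall fun n => ?_)
      obtain ⟨p, q, _, _, hq1, hq2, _, hqle⟩ := hsand u v hu huv (n+1) n.succ_pos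
      push_cast at hqle
      have hxq : γ ↑q ≤ γ x := hmax _ ⟨hq1.le, hq2.le⟩
      nlinarith
    -- Step B: increments of Z equal the Stieltjes integral, for rational endpoints
    have stepB : ∀ u v : ℚ, 0 < (u:ℝ) → (u:ℝ) < (v:ℝ) →
        Z v - Z u = ∫ w in Set.Ioc (u:ℝ) (v:ℝ), γ w ∂F.measure := by
      intro u v hu huv
      have hFnn : (0:ℝ) ≤ F v - F u := by linarith [F.mono huv.le]
      have est : ∀ ε : ℝ, 0 < ε →
          |(Z v - Z u) - ∫ w in Set.Ioc (u:ℝ) (v:ℝ), γ w ∂F.measure| ≤ ε * (F v - F u) := by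
        intro ε hε
        obtain ⟨δ, hδ, hδ'⟩ := Metric.uniformContinuousOn_iff.1
          ((isCompact_Icc (a := (u:ℝ)) (b := (v:ℝ))).uniformContinuousOn_of_continuous
            hγ.continuousOn) ε hε
        obtain ⟨k, hk⟩ := exists_nat_gt (((v:ℝ) - u)/δ)
        have hk0 : 0 < k := by
          have h1 : (0:ℝ) < k := lt_trans (div_pos (by linarith) hδ) hk
          exact_mod_cast h1
        set dr : ℝ := ((v:ℝ) - u)/k with hdr
        have hdrpos : 0 < dr := div_pos (by linarith) (by exact_mod_cast hk0)
        have hdrδ : dr < δ := by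
          rw [hdr, div_lt_iff₀ (by exact_mod_cast hk0)]
          rw [div_lt_iff₀ hδ] at hk
          nlinarith
        set xi : ℕ → ℚ := fun i => u + i * ((v - u)/k) with hxi
        have hxir : ∀ i : ℕ, ((xi i : ℚ) : ℝ) = (u:ℝ) + i * dr := by
          intro i
          rw [hxi, hdr]
          push_cast
          ring
        have hx0 : ((xi 0 : ℚ) : ℝ) = (u:ℝ) := by rw [hxir]; push_cast; ring
        have hxkv : ((xi k : ℚ) : ℝ) = (v:ℝ) := by
          rw [hxir, hdr]
          field_simp
          ring
        have hlt : ∀ i : ℕ, ((xi i : ℚ) : ℝ) < xi (i+1) := by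
          intro i
          rw [hxir, hxir]
          push_cast
          nlinarith
        have hmem : ∀ i : ℕ, i ≤ k → (u:ℝ) ≤ xi i ∧ ((xi i : ℚ):ℝ) ≤ v := by
          intro i hi
          constructor
          · rw [hxir]
            have : 0 ≤ (i:ℝ) * dr := by positivity
            linarith
          · rw [hxir]
            have h1 : (i:ℝ) * dr ≤ (k:ℝ) * dr := by
              have : (i:ℝ) ≤ k := by exact_mod_cast hi
              nlinarith
            have h2 : (k:ℝ) * dr = (v:ℝ) - u := by
              rw [hdr]; field_simp
            linarith
        have hxpos : ∀ i : ℕ, i ≤ k → 0 < ((xi i : ℚ) : ℝ) :=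
          fun i hi => lt_of_lt_of_le hu (hmem i hi).1
        have term : ∀ i : ℕ, i < k →
            |(Z (xi (i+1)) - Z (xi i)) -
              ∫ w in Set.Ioc ((xi i : ℚ):ℝ) ((xi (i+1) : ℚ):ℝ), γ w ∂F.measure|
              ≤ ε * (F (xi (i+1)) - F (xi i)) := by
          intro i hik
          have hik1 : i + 1 ≤ k := hik
          have ha : 0 < ((xi i : ℚ):ℝ) := hxpos i hik.le
          have hab : ((xi i : ℚ):ℝ) < xi (i+1) := hlt i
          have hwidth : ((xi (i+1) : ℚ):ℝ) - xi i = dr := by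
            rw [hxir, hxir]; push_cast; ring
          have hsub : Set.Icc ((xi i : ℚ):ℝ) ((xi (i+1):ℚ):ℝ) ⊆ Set.Icc (u:ℝ) (v:ℝ) :=
            Set.Icc_subset_Icc (hmem i hik.le).1 (hmem (i+1) hik1).2
          obtain ⟨m, hmmem, hmmin⟩ :=
            (isCompact_Icc (a := ((xi i : ℚ):ℝ)) (b := ((xi (i+1):ℚ):ℝ))).exists_isMinOn
              (Set.nonempty_Icc.2 hab.le) hγ.continuousOn
          obtain ⟨M, hMmem, hMmax⟩ :=
            (isCompact_Icc (a := ((xi i : ℚ):ℝ)) (b := ((xi (i+1):ℚ):ℝ))).exists_isMaxOn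
              (Set.nonempty_Icc.2 hab.le) hγ.continuousOn
          have h1 := stepA_lb (xi i) (xi (i+1)) ha hab m hmmem (fun z hz => hmmin hz)
          have h2 := stepA_ub (xi i) (xi (i+1)) ha hab M hMmem (fun z hz => hMmax hz)
          have h3 := aux_int_lb F hγ hab.le (x := m) (fun z hz => hmmin ⟨hz.1.le, hz.2⟩)
          have h4 := aux_int_ub F hγ hab.le (x := M) (fun z hz => hMmax ⟨hz.1.le, hz.2⟩)
          have hFnn' : (0:ℝ) ≤ F (xi (i+1)) - F (xi i) := by linarith [F.mono hab.le]
          have hdist : dist (γ M) (γ m) < ε := by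
            apply hδ' M (hsub hMmem) m (hsub hmmem)
            calc dist M m ≤ ((xi (i+1):ℚ):ℝ) - xi i := Real.dist_le_of_mem_Icc hMmem hmmem
            _ = dr := hwidth
            _ < δ := hdrδ
          rw [Real.dist_eq] at hdist
          have h5 : γ M - γ m < ε := lt_of_le_of_lt (le_abs_self _) hdist
          rw [abs_sub_le_iff]
          constructor <;> nlinarith
        have hZsum : Z v - Z u = ∑ i ∈ Finset.range k, (Z (xi (i+1)) - Z (xi i)) := by
          rw [Finset.sum_range_sub (fun i => Z (xi i)), hxkv, hx0]
        have hFsum : F v - F u = ∑ i ∈ Finset.range k, (F (xi (i+1)) - F (xi i)) := by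
          rw [Finset.sum_range_sub (fun i => F (xi i)), hxkv, hx0]
        have hIsum : (∫ w in Set.Ioc (u:ℝ) (v:ℝ), γ w ∂F.measure)
            = ∑ i ∈ Finset.range k,
              ∫ w in Set.Ioc ((xi i:ℚ):ℝ) ((xi (i+1):ℚ):ℝ), γ w ∂F.measure := by
          have hg : ∀ i ∈ Finset.range k,
              (∫ w in Set.Ioc ((xi i:ℚ):ℝ) ((xi (i+1):ℚ):ℝ), γ w ∂F.measure)
                = (∫ w in Set.Ioc (u:ℝ) ((xi (i+1):ℚ):ℝ), γ w ∂F.measure)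
                  - ∫ w in Set.Ioc (u:ℝ) ((xi i:ℚ):ℝ), γ w ∂F.measure := by
            intro i hi
            rw [aux_add F hγ (hmem i (Finset.mem_range.1 hi).le).1 (hlt i).le]
            ring
          rw [Finset.sum_congr rfl hg,
            Finset.sum_range_sub (fun i => ∫ w in Set.Ioc (u:ℝ) ((xi i:ℚ):ℝ), γ w ∂F.measure),
            hxkv, hx0]
          simp
        calc |(Z v - Z u) - ∫ w in Set.Ioc (u:ℝ) (v:ℝ), γ w ∂F.measure|
            = |∑ i ∈ Finset.range k, ((Z (xi (i+1)) - Z (xi i)) -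
                ∫ w in Set.Ioc ((xi i:ℚ):ℝ) ((xi (i+1):ℚ):ℝ), γ w ∂F.measure)| := by
              rw [hZsum, hIsum, ← Finset.sum_sub_distrib]
        _ ≤ ∑ i ∈ Finset.range k, |(Z (xi (i+1)) - Z (xi i)) -
                ∫ w in Set.Ioc ((xi i:ℚ):ℝ) ((xi (i+1):ℚ):ℝ), γ w ∂F.measure| :=
              Finset.abs_sum_le_sum_abs _ _
        _ ≤ ∑ i ∈ Finset.range k, ε * (F (xi (i+1)) - F (xi i)) :=
              Finset.sum_le_sum fun i hi => term i (Finset.mem_range.1 hi)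
        _ = ε * (F v - F u) := by rw [hFsum, Finset.mul_sum]
      have hlim : Tendsto (fun n : ℕ => (1/((n:ℝ)+1)) * (F v - F u)) atTop (𝓝 0) := by
        simpa using tendsto_one_div_add_atTop_nhds_zero_nat.mul_const (F v - F u)
      have habs : |(Z v - Z u) - ∫ w in Set.Ioc (u:ℝ) (v:ℝ), γ w ∂F.measure| ≤ 0 :=
        ge_of_tendsto hlim (Eventually.of_forall fun n => est (1/((n:ℝ)+1)) (by positivity))
      have := abs_nonneg ((Z v - Z u) - ∫ w in Set.Ioc (u:ℝ) (v:ℝ), γ w ∂F.measure)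
      have h0' : |(Z v - Z u) - ∫ w in Set.Ioc (u:ℝ) (v:ℝ), γ w ∂F.measure| = 0 := le_antisymm habs this
      have := abs_eq_zero.1 h0'
      linarith
    -- Step C: value of Z at positive rationals
    have stepC : ∀ s : ℚ, 0 < (s:ℝ) →
        Z s = ζ 0 + c + ∫ w in Set.Ioc (0:ℝ) (s:ℝ), γ w ∂F.measure := by
      intro s hs
      set r : ℕ → ℚ := fun n => s / (n+2) with hr
      have hrcast : ∀ n : ℕ, ((r n : ℚ) : ℝ) = (s:ℝ)/((n:ℝ)+2) := by
        intro n; rw [hr]; push_cast; ring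
      have hrpos : ∀ n : ℕ, 0 < ((r n):ℝ) := by
        intro n; rw [hrcast]; positivity
      have hrlt : ∀ n : ℕ, ((r n):ℝ) < s := by
        intro n
        rw [hrcast, div_lt_iff₀ (by positivity)]
        nlinarith
      have hrlim : Tendsto (fun n : ℕ => ((r n):ℝ)) atTop (𝓝 0) := by
        have h1 : Tendsto (fun n : ℕ => (s:ℝ)/((n:ℝ)+2)) atTop (𝓝 0) :=
          Tendsto.div_atTop tendsto_const_nhds
            (tendsto_atTop_add_const_right atTop 2 tendsto_natCast_atTop_atTop)
        exact h1.congr fun n => (hrcast n).symm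
      have hrlim' : Tendsto (fun n : ℕ => ((r n):ℝ)) atTop (𝓝[>] 0) :=
        tendsto_nhdsWithin_of_tendsto_nhds_of_eventually_within _ hrlim
          (Eventually.of_forall hrpos)
      have h1 : Tendsto (fun n : ℕ => Z ((r n):ℝ)) atTop (𝓝 (Z 0)) :=
        (aux_FrightTendsto Z 0).comp hrlim'
      have h2 : Tendsto (fun n : ℕ => F ((r n):ℝ)) atTop (𝓝 (F 0)) :=
        (aux_FrightTendsto F 0).comp hrlim'
      have h3 : Tendsto (fun n : ℕ => ∫ w in Set.Ioc (0:ℝ) ((r n):ℝ), γ w ∂F.measure)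
          atTop (𝓝 0) := by
        obtain ⟨C, hC⟩ := (isCompact_Icc (a := (0:ℝ)) (b := (s:ℝ))).exists_bound_of_continuousOn
          hγ.continuousOn
        refine squeeze_zero_norm (a := fun n => C * (F ((r n):ℝ) - F 0)) (fun n => ?_) ?_
        · rw [Real.norm_eq_abs]
          exact aux_boundIoc F hγ (hrpos n).le
            (fun x hx => hC x ⟨hx.1, hx.2.trans (hrlt n).le⟩)
        · have := (h2.sub_const (F 0)).const_mul C
          simpa using this
      have h4 : ∀ n : ℕ, Z s - Z (r n)
          = (∫ w in Set.Ioc (0:ℝ) (s:ℝ), γ w ∂F.measure)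
            - ∫ w in Set.Ioc (0:ℝ) ((r n):ℝ), γ w ∂F.measure := by
        intro n
        rw [stepB (r n) s (hrpos n) (hrlt n), aux_add F hγ (hrpos n).le (hrlt n).le]
        ring
      have h5 : Tendsto (fun n : ℕ => (Z s - Z (r n)) + Z (r n)) atTop
          (𝓝 (((∫ w in Set.Ioc (0:ℝ) (s:ℝ), γ w ∂F.measure) - 0) + Z 0)) := by
        refine Tendsto.add ?_ h1
        exact ((tendsto_const_nhds (x := ∫ w in Set.Ioc (0:ℝ) (s:ℝ), γ w ∂F.measure)
          (f := atTop)).sub h3).congr fun n => (h4 n).symm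
      have h6 : Tendsto (fun n : ℕ => (Z s - Z (r n)) + Z (r n)) atTop (𝓝 (Z s)) := by
        have : (fun n : ℕ => (Z s : ℝ)) = fun n : ℕ => (Z s - Z (r n)) + Z (r n) := by
          funext n; ring
        exact this ▸ tendsto_const_nhds
      have := tendsto_nhds_unique h6 h5
      rw [hZ0] at this
      linarith
    -- Step D: conclude
    intro t ht
    rcases eq_or_lt_of_le ht with ht0 | ht0
    · simp [← ht0]
    rw [if_neg ht0.ne']
    have hqex : ∀ n : ℕ, ∃ q : ℚ, t - t/((n:ℝ)+2) < q ∧ (q:ℝ) < t := by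
      intro n
      refine exists_rat_btwn ?_
      have : 0 < t/((n:ℝ)+2) := by positivity
      linarith
    choose q hq1 hq2 using hqex
    have hqpos : ∀ n : ℕ, 0 < ((q n):ℝ) := by
      intro n
      have h1 : t/((n:ℝ)+2) ≤ t/2 := by
        apply div_le_div_of_nonneg_left ht0.le two_pos
        have : (0:ℝ) ≤ n := Nat.cast_nonneg n
        linarith
      have := hq1 n
      linarith
    have hqlim : Tendsto (fun n : ℕ => ((q n):ℝ)) atTop (𝓝 t) := by
      have hlow : Tendsto (fun n : ℕ => t - t/((n:ℝ)+2)) atTop (𝓝 t) := by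
        have h1 : Tendsto (fun n : ℕ => t/((n:ℝ)+2)) atTop (𝓝 0) :=
          Tendsto.div_atTop tendsto_const_nhds
            (tendsto_atTop_add_const_right atTop 2 tendsto_natCast_atTop_atTop)
        have := (tendsto_const_nhds (x := t) (f := atTop)).sub h1
        simpa using this
      exact tendsto_of_tendsto_of_tendsto_of_le_of_le hlow tendsto_const_nhds
        (fun n => (hq1 n).le) (fun n => (hq2 n).le)
    have hZt : Tendsto (fun n : ℕ => Z ((q n):ℝ)) atTop (𝓝 (ζ t)) := by
      have hζq : Tendsto (fun n : ℕ => ζ ((q n):ℝ)) atTop (𝓝 (ζ t)) := by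
        refine (hζl t ht0).tendsto.comp ?_
        exact tendsto_nhdsWithin_of_tendsto_nhds_of_eventually_within _ hqlim
          (Eventually.of_forall fun n => hq2 n)
      exact tendsto_of_tendsto_of_tendsto_of_le_of_le hζq tendsto_const_nhds
        (fun n => hζZ _) (fun n => hZζ _ _ (hq2 n))
    have hint : Tendsto (fun n : ℕ => ∫ w in Set.Ioc (0:ℝ) ((q n):ℝ), γ w ∂F.measure)
        atTop (𝓝 (∫ w in Set.Ioo (0:ℝ) t, γ w ∂F.measure)) := by
      have heq : ∀ n : ℕ, ∫ w in Set.Ioc (0:ℝ) ((q n):ℝ), γ w ∂F.measure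
          = ∫ w, (Set.Ioc (0:ℝ) ((q n):ℝ)).indicator γ w ∂F.measure :=
        fun n => (integral_indicator measurableSet_Ioc).symm
      have heq2 : ∫ w in Set.Ioo (0:ℝ) t, γ w ∂F.measure
          = ∫ w, (Set.Ioo (0:ℝ) t).indicator γ w ∂F.measure :=
        (integral_indicator measurableSet_Ioo).symm
      rw [heq2]
      simp_rw [heq]
      apply tendsto_integral_of_dominated_convergence
        ((Set.Icc (0:ℝ) t).indicator (fun x => |γ x|))
      · intro n
        exact (hγ.aestronglyMeasurable).indicator measurableSet_Ioc
      · rw [integrable_indicator_iff measurableSet_Icc]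
        exact (continuous_abs.comp hγ).integrableOn_Icc
      · intro n
        refine Eventually.of_forall fun x => ?_
        by_cases hx : x ∈ Set.Ioc (0:ℝ) ((q n):ℝ)
        · rw [Set.indicator_of_mem hx,
            Set.indicator_of_mem (Set.mem_Icc.2 ⟨hx.1.le, hx.2.trans (hq2 n).le⟩)]
          exact le_of_eq (Real.norm_eq_abs _)
        · rw [Set.indicator_of_notMem hx, norm_zero]
          exact Set.indicator_nonneg (fun y _ => abs_nonneg _) x
      · refine Eventually.of_forall fun x => ?_
        by_cases hx : x ∈ Set.Ioo (0:ℝ) t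
        · have hev : ∀ᶠ n in atTop, x < ((q n):ℝ) := hqlim.eventually (eventually_gt_nhds hx.2)
          rw [Set.indicator_of_mem hx]
          refine Tendsto.congr' ?_ (tendsto_const_nhds (x := γ x))
          filter_upwards [hev] with n hn
          exact (Set.indicator_of_mem (Set.mem_Ioc.2 ⟨hx.1, hn.le⟩) γ).symm
        · have hx' : ∀ n : ℕ, x ∉ Set.Ioc (0:ℝ) ((q n):ℝ) := by
            intro n hmem
            exact hx ⟨hmem.1, lt_of_le_of_lt hmem.2 (hq2 n)⟩
          simp only [Set.indicator_of_notMem (hx' _), Set.indicator_of_notMem hx]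
          exact tendsto_const_nhds
    have hlim2 : Tendsto (fun n : ℕ => Z ((q n):ℝ)) atTop
        (𝓝 (ζ 0 + c + ∫ w in Set.Ioo (0:ℝ) t, γ w ∂F.measure)) := by
      have := (tendsto_const_nhds (x := ζ 0 + c) (f := atTop)).add hint
      refine this.congr fun n => ?_
      rw [stepC (q n) (hqpos n)]
    have := tendsto_nhds_unique hZt hlim2
    rw [this]
    ring
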